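/- Let F(x,y) ∈ ℚ̄[x,y] be irreducible with deg_x F ≥ 2, defining the affine curve X : F(x,y) = 0. Suppose there exist a rational function A(y) ∈ ℚ̄(y) of degree at least two and a rational function R(x,y) over ℚ̄ such that for all but finitely many y₀ ∈ ℂ the map x ↦ R(x,y₀) restricts to a bijection from the y₀-fiber of X onto the A(y₀)-fiber of X. Then for every y₀ ∈ ℚ̄ there is a number field k such that for every n ≥ 0 for which the n-th iterate A^{∘n}(y₀) is defined, the A^{∘n}(y₀)-fiber of X is contained in k. -/

import Mathlib

/-- `ℚ̄`: the field of algebraic numbers, i.e. the algebraic closure of `ℚ` inside `ℂ`. -/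
noncomputable abbrev Qbar : IntermediateField ℚ ℂ := algebraicClosure ℚ ℂ

/-- For `F ∈ ℚ̄[x,y]`, encoded as a polynomial in `x` whose coefficients are polynomials in `y`,
the value `F(x, y₀) ∈ ℂ` at `x, y₀ ∈ ℂ`. -/
noncomputable def fval (F : Polynomial (Polynomial ↥Qbar)) (x y₀ : ℂ) : ℂ :=
  Polynomial.eval₂
    ((Polynomial.evalRingHom y₀).comp (Polynomial.mapRingHom (algebraMap ↥Qbar ℂ))) x F

/-- The `y₀`-fiber of the curve `X : F(x,y) = 0`: the set of complex roots of `F(x, y₀)`. -/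
noncomputable def fiber (F : Polynomial (Polynomial ↥Qbar)) (y₀ : ℂ) : Set ℂ :=
  {x : ℂ | fval F x y₀ = 0}

/-- The degree of a rational function: the maximum of the degrees of its numerator and
denominator in lowest terms. -/
noncomputable def ratDeg {K : Type*} [Field K] (A : RatFunc K) : ℕ :=
  max A.num.natDegree A.denom.natDegree

/-- The value at `z ∈ ℂ` of a rational function `A ∈ ℚ̄(y)`. -/
noncomputable def evalA (A : RatFunc ↥Qbar) (z : ℂ) : ℂ :=
  RatFunc.eval (algebraMap ↥Qbar ℂ) z A

/-- `A ∈ ℚ̄(y)` is defined at `z ∈ ℂ`, i.e. `z` is not a pole of `A`. -/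
noncomputable def DefinedAt (A : RatFunc ↥Qbar) (z : ℂ) : Prop :=
  Polynomial.eval z (A.denom.map (algebraMap ↥Qbar ℂ)) ≠ 0

/-- The `n`-th iterate `A^{∘n}(y₀)` is defined. -/
noncomputable def IterDefined (A : RatFunc ↥Qbar) (y₀ : ℂ) (n : ℕ) : Prop :=
  ∀ m < n, DefinedAt A ((evalA A)^[m] y₀)

open Polynomial

/-- The set of coefficients (in `ℂ`) of a one-variable polynomial over `ℚ̄`. -/
noncomputable def coeffs1 (p : Polynomial ↥Qbar) : Set ℂ :=
  ⋃ j ∈ p.support, {(algebraMap ↥Qbar ℂ) (p.coeff j)}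

/-- The set of coefficients (in `ℂ`) of a two-variable polynomial over `ℚ̄`. -/
noncomputable def coeffs2 (G : Polynomial (Polynomial ↥Qbar)) : Set ℂ :=
  ⋃ i ∈ G.support, ⋃ j ∈ (G.coeff i).support, {(algebraMap ↥Qbar ℂ) ((G.coeff i).coeff j)}

lemma coeffs1_finite (p : Polynomial ↥Qbar) : (coeffs1 p).Finite :=
  Set.Finite.biUnion p.support.finite_toSet fun _ _ => Set.finite_singleton _

lemma coeffs2_finite (G : Polynomial (Polynomial ↥Qbar)) : (coeffs2 G).Finite :=
  Set.Finite.biUnion G.support.finite_toSet fun i _ =>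
    Set.Finite.biUnion (G.coeff i).support.finite_toSet fun _ _ => Set.finite_singleton _

lemma coeffs1_subset_Qbar (p : Polynomial ↥Qbar) : coeffs1 p ⊆ (Qbar : Set ℂ) := by
  intro c hc
  simp only [coeffs1, Set.mem_iUnion, Set.mem_singleton_iff] at hc
  obtain ⟨j, _, rfl⟩ := hc
  exact SetLike.coe_mem _

lemma coeffs2_subset_Qbar (G : Polynomial (Polynomial ↥Qbar)) :
    coeffs2 G ⊆ (Qbar : Set ℂ) := by
  intro c hc
  simp only [coeffs2, Set.mem_iUnion, Set.mem_singleton_iff] at hc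
  obtain ⟨i, _, j, _, rfl⟩ := hc
  exact SetLike.coe_mem _

lemma coeff1_mem {k : IntermediateField ℚ ℂ} {p : Polynomial ↥Qbar}
    (h : coeffs1 p ⊆ (k : Set ℂ)) (j : ℕ) : (algebraMap ↥Qbar ℂ) (p.coeff j) ∈ k := by
  by_cases hj : p.coeff j = 0
  · simp only [hj, map_zero]; exact zero_mem k
  · exact h (by
      simp only [coeffs1, Set.mem_iUnion, Set.mem_singleton_iff]
      exact ⟨j, mem_support_iff.mpr hj, rfl⟩)

lemma coeff2_mem {k : IntermediateField ℚ ℂ} {G : Polynomial (Polynomial ↥Qbar)}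
    (h : coeffs2 G ⊆ (k : Set ℂ)) (i j : ℕ) :
    (algebraMap ↥Qbar ℂ) ((G.coeff i).coeff j) ∈ k := by
  by_cases hij : (G.coeff i).coeff j = 0
  · simp only [hij, map_zero]; exact zero_mem k
  · have hi : G.coeff i ≠ 0 := fun h0 => hij (by simp [h0])
    exact h (by
      simp only [coeffs2, Set.mem_iUnion, Set.mem_singleton_iff]
      exact ⟨i, mem_support_iff.mpr hi, j, mem_support_iff.mpr hij, rfl⟩)

lemma eval1_mem {k : IntermediateField ℚ ℂ} {p : Polynomial ↥Qbar}
    (h : coeffs1 p ⊆ (k : Set ℂ)) {z : ℂ} (hz : z ∈ k) :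
    Polynomial.eval₂ (algebraMap ↥Qbar ℂ) z p ∈ k := by
  rw [Polynomial.eval₂_eq_sum_range]
  exact sum_mem fun j _ => mul_mem (coeff1_mem h j) (pow_mem hz j)

lemma evalA_mem {k : IntermediateField ℚ ℂ} {A : RatFunc ↥Qbar}
    (h1 : coeffs1 A.num ⊆ (k : Set ℂ)) (h2 : coeffs1 A.denom ⊆ (k : Set ℂ))
    {z : ℂ} (hz : z ∈ k) : evalA A z ∈ k := by
  unfold evalA RatFunc.eval
  exact div_mem (eval1_mem h1 hz) (eval1_mem h2 hz)

lemma fval_mem {k : IntermediateField ℚ ℂ} {G : Polynomial (Polynomial ↥Qbar)}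
    (h : coeffs2 G ⊆ (k : Set ℂ)) {x e : ℂ} (hx : x ∈ k) (he : e ∈ k) :
    fval G x e ∈ k := by
  unfold fval
  rw [Polynomial.eval₂_eq_sum_range]
  refine sum_mem fun i _ => mul_mem ?_ (pow_mem hx i)
  simp only [RingHom.comp_apply, coe_mapRingHom, coe_evalRingHom]
  rw [Polynomial.eval_eq_sum_range]
  refine sum_mem fun j _ => mul_mem ?_ (pow_mem he j)
  rw [Polynomial.coeff_map]
  exact coeff2_mem h i j

/-- Key lemma: for `e` algebraic, the `e`-fiber of an irreducible curve of `x`-degree ≥ 2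
is finite and consists of algebraic numbers. -/
lemma fiber_finite_algebraic (F : Polynomial (Polynomial ↥Qbar)) (hirr : Irreducible F)
    (hdeg : 2 ≤ F.natDegree) (e' : ↥Qbar) :
    (fiber F (e' : ℂ)).Finite ∧ fiber F (e' : ℂ) ⊆ (Qbar : Set ℂ) := by
  set q : Polynomial ↥Qbar := F.map (Polynomial.evalRingHom e') with hq_def
  have hq : q ≠ 0 := by
    intro h0
    have hall : ∀ i, (F.coeff i).eval e' = 0 := by
      intro i
      have := congrArg (fun p => Polynomial.coeff p i) h0
      simpa [hq_def, Polynomial.coeff_map] using this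
    have hdvd : Polynomial.C (Polynomial.X - Polynomial.C e') ∣ F := by
      conv_rhs => rw [F.as_sum_support_C_mul_X_pow]
      refine Finset.dvd_sum fun i _ => dvd_mul_of_dvd_left ?_ _
      exact map_dvd (Polynomial.C : Polynomial ↥Qbar →+* Polynomial (Polynomial ↥Qbar)) (Polynomial.dvd_iff_isRoot.mpr (hall i))
    obtain ⟨t, ht⟩ := hdvd
    rcases hirr.isUnit_or_isUnit ht with hu | hu
    · exact Polynomial.not_isUnit_X_sub_C e' (Polynomial.isUnit_C.mp hu)
    · obtain ⟨r, _, rfl⟩ := Polynomial.isUnit_iff.mp hu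
      rw [ht, ← Polynomial.C_mul] at hdeg
      simp only [Polynomial.natDegree_C] at hdeg
      omega
  have hφ : (Polynomial.evalRingHom ((e' : ℂ))).comp
      (Polynomial.mapRingHom (algebraMap ↥Qbar ℂ))
      = (algebraMap ↥Qbar ℂ).comp (Polynomial.evalRingHom e') := RingHom.ext fun p => by
    simp only [RingHom.comp_apply, coe_mapRingHom, coe_evalRingHom]
    rw [Polynomial.eval_map,
      show ((e' : ℂ)) = algebraMap ↥Qbar ℂ e' from rfl, Polynomial.eval₂_at_apply]
  have key : ∀ x : ℂ, fval F x (e' : ℂ) = (q.map (algebraMap ↥Qbar ℂ)).eval x := by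
    intro x
    unfold fval
    rw [hφ, hq_def, Polynomial.eval_map, Polynomial.eval₂_map]
  have hqm : q.map (algebraMap ↥Qbar ℂ) ≠ 0 :=
    (Polynomial.map_ne_zero_iff (algebraMap ↥Qbar ℂ).injective).mpr hq
  constructor
  · have : fiber F (e' : ℂ) = {x | (q.map (algebraMap ↥Qbar ℂ)).IsRoot x} := by
      ext x; simp [fiber, key x, Polynomial.IsRoot]
    rw [this]
    exact Polynomial.finite_setOf_isRoot hqm
  · intro x hx
    have hroot : (q.map (algebraMap ↥Qbar ℂ)).eval x = 0 := by
      rw [← key x]; exact hx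
    have halg : IsAlgebraic ↥Qbar x := by
      refine ⟨q, hq, ?_⟩
      rw [Polynomial.aeval_def, ← Polynomial.eval_map]
      exact hroot
    haveI : Algebra.IsIntegral ℚ ↥Qbar :=
      (algebraicClosure.isAlgebraic ℚ ℂ).isIntegral
    exact mem_algebraicClosure_iff'.mpr (isIntegral_trans x halg.isIntegral)

theorem stmt2 (F : Polynomial (Polynomial ↥Qbar)) (hirr : Irreducible F)
    (hdeg : 2 ≤ F.natDegree) (A : RatFunc ↥Qbar) (P Q : Polynomial (Polynomial ↥Qbar))
    (hA : 2 ≤ ratDeg A) (hQ : Q ≠ 0)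
    (hbij : ∃ E : Set ℂ, E.Finite ∧ ∀ y₀ : ℂ, y₀ ∉ E →
      (∀ x ∈ fiber F y₀, fval Q x y₀ ≠ 0) ∧
      Set.BijOn (fun x : ℂ => fval P x y₀ / fval Q x y₀) (fiber F y₀)
        (fiber F (evalA A y₀))) :
    ∀ y₀ : ℂ, y₀ ∈ Qbar →
      ∃ k : IntermediateField ℚ ℂ, FiniteDimensional ℚ ↥k ∧
        ∀ n : ℕ, IterDefined A y₀ n → fiber F ((evalA A)^[n] y₀) ⊆ (k : Set ℂ) := by
  obtain ⟨E, hEfin, hE⟩ := hbij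
  intro y₀ hy₀
  -- the exceptional points whose fibers we adjoin directly
  set E'' : Set ℂ := insert y₀ (evalA A '' (E ∩ (Qbar : Set ℂ))) with hE''_def
  have hE''fin : E''.Finite :=
    Set.Finite.insert _ ((hEfin.inter_of_left _).image _)
  have hE''Qbar : E'' ⊆ (Qbar : Set ℂ) := by
    intro e he
    rcases he with rfl | ⟨w, hw, rfl⟩
    · exact hy₀
    · exact evalA_mem (coeffs1_subset_Qbar _) (coeffs1_subset_Qbar _) hw.2
  -- fibers over exceptional points
  set BF : Set ℂ := ⋃ e ∈ E'', fiber F e with hBF_def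
  have hBFfin : BF.Finite := by
    refine Set.Finite.biUnion hE''fin fun e he => ?_
    obtain ⟨e', rfl⟩ : ∃ e' : ↥Qbar, (e' : ℂ) = e := ⟨⟨e, hE''Qbar he⟩, rfl⟩
    exact (fiber_finite_algebraic F hirr hdeg e').1
  have hBFQbar : BF ⊆ (Qbar : Set ℂ) := by
    refine Set.iUnion₂_subset fun e he => ?_
    obtain ⟨e', rfl⟩ : ∃ e' : ↥Qbar, (e' : ℂ) = e := ⟨⟨e, hE''Qbar he⟩, rfl⟩
    exact (fiber_finite_algebraic F hirr hdeg e').2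
  -- the generating set
  set S : Set ℂ := {y₀} ∪ coeffs2 F ∪ coeffs2 P ∪ coeffs2 Q ∪ coeffs1 A.num
      ∪ coeffs1 A.denom ∪ BF with hS_def
  have hSfin : S.Finite := by
    simp only [hS_def]
    exact ((((((Set.finite_singleton _).union (coeffs2_finite F)).union
      (coeffs2_finite P)).union (coeffs2_finite Q)).union (coeffs1_finite _)).union
      (coeffs1_finite _)).union hBFfin
  have hSQbar : S ⊆ (Qbar : Set ℂ) := by
    simp only [hS_def]
    refine Set.union_subset (Set.union_subset (Set.union_subset (Set.union_subset
      (Set.union_subset (Set.union_subset ?_ (coeffs2_subset_Qbar F))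
        (coeffs2_subset_Qbar P)) (coeffs2_subset_Qbar Q)) (coeffs1_subset_Qbar _))
      (coeffs1_subset_Qbar _)) hBFQbar
    intro c hc; rw [Set.mem_singleton_iff] at hc; subst hc; exact hy₀
  refine ⟨IntermediateField.adjoin ℚ S, ?_, ?_⟩
  · haveI : Finite ↥S := hSfin.to_subtype
    exact IntermediateField.finiteDimensional_adjoin fun x hx =>
      mem_algebraicClosure_iff'.mp (hSQbar hx)
  set k : IntermediateField ℚ ℂ := IntermediateField.adjoin ℚ S with hk_def
  have hSk : S ⊆ (k : Set ℂ) := IntermediateField.subset_adjoin ℚ S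
  have hPk : coeffs2 P ⊆ (k : Set ℂ) := fun c hc =>
    hSk (Or.inl (Or.inl (Or.inl (Or.inl (Or.inr hc)))))
  have hQk : coeffs2 Q ⊆ (k : Set ℂ) := fun c hc =>
    hSk (Or.inl (Or.inl (Or.inl (Or.inr hc))))
  have hAnk : coeffs1 A.num ⊆ (k : Set ℂ) := fun c hc =>
    hSk (Or.inl (Or.inl (Or.inr hc)))
  have hAdk : coeffs1 A.denom ⊆ (k : Set ℂ) := fun c hc =>
    hSk (Or.inl (Or.inr hc))
  have hBFk : BF ⊆ (k : Set ℂ) := fun c hc => hSk (Or.inr hc)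
  have hy₀k : y₀ ∈ k := hSk (Or.inl (Or.inl (Or.inl (Or.inl (Or.inl (Or.inl rfl))))))
  -- all iterates lie in k and in Qbar
  have hit : ∀ m : ℕ, (evalA A)^[m] y₀ ∈ k ∧ (evalA A)^[m] y₀ ∈ Qbar := by
    intro m
    induction m with
    | zero => exact ⟨hy₀k, hy₀⟩
    | succ m ih =>
      rw [Function.iterate_succ_apply']
      exact ⟨evalA_mem hAnk hAdk ih.1,
        evalA_mem (coeffs1_subset_Qbar _) (coeffs1_subset_Qbar _) ih.2⟩
  -- main induction
  intro n
  induction n with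
  | zero =>
    intro _
    have : fiber F y₀ ⊆ BF :=
      Set.subset_biUnion_of_mem (u := fun e => fiber F e) (Set.mem_insert _ _)
    exact fun x hx => hBFk (this hx)
  | succ n ih =>
    intro hID
    have hIDn : IterDefined A y₀ n := fun m hm => hID m (Nat.lt_succ_of_lt hm)
    rw [Function.iterate_succ_apply']
    set e : ℂ := (evalA A)^[n] y₀ with he_def
    by_cases heE : e ∈ E
    · have hmem : evalA A e ∈ E'' :=
        Set.mem_insert_of_mem _ ⟨e, ⟨heE, (hit n).2⟩, rfl⟩
      have : fiber F (evalA A e) ⊆ BF :=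
        Set.subset_biUnion_of_mem (u := fun e => fiber F e) hmem
      exact fun x hx => hBFk (this hx)
    · obtain ⟨_, hbij'⟩ := hE e heE
      intro z hz
      obtain ⟨x, hx, hxz⟩ := hbij'.surjOn hz
      have hxk : x ∈ k := ih hIDn hx
      have hek : e ∈ k := (hit n).1
      rw [← hxz]
      exact div_mem (fval_mem hPk hxk hek) (fval_mem hQk hxk hek)
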